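/- Consequently, if there exists Λ ∈ ℝ such that lim_{t→∞} (1/t) log ‖X_t‖_{M2} = Λ for a continuous X : [-1,∞) → ℝ with X_t never identically zero, then also lim_{t→∞} (1/t) log ‖X_t‖_∞ = Λ, where ‖·‖_∞ is the sup-norm on C([-1,0],ℝ). -/

import Mathlib

open Filter

/-- If `(1/t) log ‖X_t‖_{M2} → Λ` for continuous `X : [-1,∞) → ℝ` whose segments are never
identically zero, then also `(1/t) log ‖X_t‖_∞ → Λ`. -/
theorem stmt6 (X : ℝ → ℝ) (hX : ContinuousOn X (Set.Ici (-1 : ℝ)))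
    (hnz : ∀ t : ℝ, 0 ≤ t → ∃ s ∈ Set.Icc (-1 : ℝ) 0, X (t + s) ≠ 0)
    (Λ : ℝ)
    (hM2 : Tendsto
      (fun t : ℝ => (1 / t) *
        Real.log (Real.sqrt ((X t) ^ 2 + ∫ s in (-1 : ℝ)..0, (X (t + s)) ^ 2)))
      atTop (nhds Λ)) :
    Tendsto
      (fun t : ℝ => (1 / t) * Real.log (⨆ s : Set.Icc (-1 : ℝ) 0, |X (t + s.1)|))
      atTop (nhds Λ) := by
  haveI : Nonempty (Set.Icc (-1 : ℝ) 0) := ⟨⟨0, by norm_num⟩⟩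
  -- abbreviations
  set A : ℝ → ℝ := fun t => (X t) ^ 2 + ∫ s in (-1 : ℝ)..0, (X (t + s)) ^ 2 with hAdef
  set S : ℝ → ℝ := fun t => ⨆ s : Set.Icc (-1 : ℝ) 0, |X (t + s.1)| with hSdef
  -- continuity of segments
  have cont_seg : ∀ t : ℝ, 0 ≤ t → ContinuousOn (fun s => X (t + s)) (Set.Icc (-1 : ℝ) 0) := by
    intro t ht
    apply hX.comp (continuous_const.add continuous_id).continuousOn
    intro s hs
    simp only [Set.mem_Ici, id_eq]
    have := hs.1
    show (-1 : ℝ) ≤ t + s; linarith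
  have intble : ∀ t : ℝ, 0 ≤ t →
      IntervalIntegrable (fun s => (X (t + s)) ^ 2) MeasureTheory.volume (-1) 0 := by
    intro t ht
    exact ((cont_seg t ht).pow 2).intervalIntegrable_of_Icc (by norm_num)
  have int_nonneg : ∀ t : ℝ, (0 : ℝ) ≤ ∫ s in (-1 : ℝ)..0, (X (t + s)) ^ 2 := fun t =>
    intervalIntegral.integral_nonneg (by norm_num) (fun u _ => sq_nonneg _)
  -- positivity of A
  have hApos : ∀ t : ℝ, 0 ≤ t → 0 < A t := by
    intro t ht
    obtain ⟨s₀, hs₀, hne⟩ := hnz t ht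
    have hint : 0 < ∫ s in (-1 : ℝ)..0, (X (t + s)) ^ 2 :=
      intervalIntegral.integral_pos (by norm_num) ((cont_seg t ht).pow 2)
        (fun x _ => sq_nonneg _) ⟨s₀, hs₀, by positivity⟩
    have := sq_nonneg (X t)
    simp only [hAdef]
    linarith
  -- boundedness of the sup family
  have hbdd : ∀ t : ℝ, 0 ≤ t →
      BddAbove (Set.range fun s : Set.Icc (-1 : ℝ) 0 => |X (t + s.1)|) := by
    intro t ht
    have h1 : (Set.range fun s : Set.Icc (-1 : ℝ) 0 => |X (t + s.1)|)
        ⊆ (fun s => |X (t + s)|) '' Set.Icc (-1 : ℝ) 0 := by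
      rintro x ⟨⟨s, hs⟩, rfl⟩
      exact ⟨s, hs, rfl⟩
    exact ((isCompact_Icc.image_of_continuousOn (cont_seg t ht).abs).bddAbove).mono h1
  -- positivity of S
  have hSpos : ∀ t : ℝ, 0 ≤ t → 0 < S t := by
    intro t ht
    obtain ⟨s₀, hs₀, hne⟩ := hnz t ht
    have h1 : |X (t + s₀)| ≤ S t := le_ciSup (hbdd t ht) ⟨s₀, hs₀⟩
    have h2 : 0 < |X (t + s₀)| := abs_pos.mpr hne
    linarith
  rw [tendsto_order]
  constructor
  · -- lower bound side
    intro a ha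
    have h0 : Tendsto (fun t : ℝ => (1 / t) * Real.log (Real.sqrt 2)) atTop (nhds 0) := by
      have := tendsto_inv_atTop_zero.mul_const (Real.log (Real.sqrt 2))
      simpa [one_div] using this
    have hL : Tendsto (fun t : ℝ => (1 / t) * Real.log (Real.sqrt (A t))
        - (1 / t) * Real.log (Real.sqrt 2)) atTop (nhds (Λ - 0)) := hM2.sub h0
    rw [sub_zero] at hL
    filter_upwards [hL.eventually (eventually_gt_nhds ha), eventually_ge_atTop (1 : ℝ)]
      with t hlt ht1
    have ht0 : (0 : ℝ) ≤ t := by linarith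
    -- A t ≤ 2 * (S t)^2
    have hXle : ∀ s ∈ Set.Icc (-1 : ℝ) 0, |X (t + s)| ≤ S t := fun s hs =>
      le_ciSup (hbdd t ht0) ⟨s, hs⟩
    have h1 : (X t) ^ 2 ≤ (S t) ^ 2 := by
      have := hXle 0 (by norm_num)
      rw [add_zero] at this
      calc (X t) ^ 2 = |X t| ^ 2 := (sq_abs _).symm
        _ ≤ (S t) ^ 2 := pow_le_pow_left₀ (abs_nonneg _) this 2
    have h2 : (∫ s in (-1 : ℝ)..0, (X (t + s)) ^ 2) ≤ (S t) ^ 2 := by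
      have := intervalIntegral.integral_mono_on (by norm_num : (-1 : ℝ) ≤ 0) (intble t ht0)
        (intervalIntegrable_const) (fun x hx => by
          calc (X (t + x)) ^ 2 = |X (t + x)| ^ 2 := (sq_abs _).symm
            _ ≤ (S t) ^ 2 := pow_le_pow_left₀ (abs_nonneg _) (hXle x hx) 2)
      simpa using this
    have hSp := hSpos t ht0
    have hAle : A t ≤ 2 * (S t) ^ 2 := by simp only [hAdef]; linarith
    have hsq : Real.sqrt (A t) ≤ Real.sqrt 2 * S t := by
      calc Real.sqrt (A t) ≤ Real.sqrt (2 * (S t) ^ 2) := Real.sqrt_le_sqrt hAle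
        _ = Real.sqrt 2 * S t := by
            rw [Real.sqrt_mul (by norm_num), Real.sqrt_sq hSp.le]
    have hlog : Real.log (Real.sqrt (A t)) ≤ Real.log (Real.sqrt 2) + Real.log (S t) := by
      have := Real.log_le_log (Real.sqrt_pos.mpr (hApos t ht0)) hsq
      rwa [Real.log_mul (by positivity) hSp.ne'] at this
    have hmul := mul_le_mul_of_nonneg_left hlog (by positivity : (0 : ℝ) ≤ 1 / t)
    rw [mul_add] at hmul
    calc a < (1 / t) * Real.log (Real.sqrt (A t)) - (1 / t) * Real.log (Real.sqrt 2) := hlt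
      _ ≤ (1 / t) * Real.log (S t) := by linarith
  · -- upper bound side
    intro b hb
    set ε : ℝ := b - Λ with hεdef
    have hε : 0 < ε := by simp only [hεdef]; linarith
    set c : ℝ := Λ + ε / 2 with hcdef
    set C : ℝ := |c| with hCdef
    have hev : ∀ᶠ u in atTop, (1 / u) * Real.log (Real.sqrt (A u)) < c :=
      hM2.eventually (eventually_lt_nhds (by simp only [hcdef]; linarith))
    obtain ⟨T₀, hT₀⟩ := eventually_atTop.mp hev
    filter_upwards [eventually_ge_atTop (max (T₀ + 1) (max 2 (2 * C / ε + 1)))] with t htt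
    have htT : T₀ + 1 ≤ t := le_trans (le_max_left _ _) htt
    have ht2 : (2 : ℝ) ≤ t := le_trans (le_trans (le_max_left _ _) (le_max_right _ _)) htt
    have htC : 2 * C / ε + 1 ≤ t := le_trans (le_trans (le_max_right _ _) (le_max_right _ _)) htt
    have htpos : (0 : ℝ) < t := by linarith
    have key : ∀ s ∈ Set.Icc (-1 : ℝ) 0, |X (t + s)| ≤ Real.exp (t * c + C) := by
      intro s hs
      set u := t + s with hudef
      have hu0 : (0 : ℝ) ≤ u := by simp only [hudef]; linarith [hs.1]
      have hupos : (0 : ℝ) < u := by simp only [hudef]; linarith [hs.1]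
      have hu := hT₀ u (by simp only [hudef]; linarith [hs.1])
      have hlog : Real.log (Real.sqrt (A u)) < u * c := by
        have h1 : Real.log (Real.sqrt (A u)) = u * ((1 / u) * Real.log (Real.sqrt (A u))) := by
          field_simp
        rw [h1]
        exact mul_lt_mul_of_pos_left hu hupos
      have huc : u * c ≤ t * c + C := by
        rcases abs_cases c with ⟨h1, h2⟩ | ⟨h1, h2⟩ <;> simp only [hCdef, hudef] <;>
          nlinarith [hs.1, hs.2]
      have hexp : Real.sqrt (A u) ≤ Real.exp (t * c + C) := by
        rw [← Real.exp_log (Real.sqrt_pos.mpr (hApos u hu0))]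
        exact Real.exp_le_exp.mpr (by linarith)
      calc |X u| = Real.sqrt ((X u) ^ 2) := (Real.sqrt_sq_eq_abs _).symm
        _ ≤ Real.sqrt (A u) := Real.sqrt_le_sqrt (by simp only [hAdef]; linarith [int_nonneg u])
        _ ≤ Real.exp (t * c + C) := hexp
    have hSle : S t ≤ Real.exp (t * c + C) := ciSup_le fun s => key s.1 s.2
    have hSp := hSpos t (by linarith)
    have hlogS : Real.log (S t) ≤ t * c + C := by
      calc Real.log (S t) ≤ Real.log (Real.exp (t * c + C)) := Real.log_le_log hSp hSle
        _ = t * c + C := Real.log_exp _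
    have hCt : C / t < ε / 2 := by
      rw [div_lt_iff₀ htpos]
      have h2C : 2 * C ≤ (t - 1) * ε := by
        have := (div_le_iff₀ hε).mp (by linarith : 2 * C / ε ≤ t - 1)
        linarith
      have hC0 : 0 ≤ C := abs_nonneg _
      nlinarith
    calc (1 / t) * Real.log (S t) ≤ (1 / t) * (t * c + C) :=
          mul_le_mul_of_nonneg_left hlogS (by positivity)
      _ = c + C / t := by field_simp
      _ < c + ε / 2 := by linarith
      _ = b := by simp only [hcdef, hεdef]; ring
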